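/- A DAG D = (V,A) is a funnel if and only if it admits a funnel labeling, i.e., a map L:V→{Fork, Merge} such that every vertex labeled Fork has indegree at most 1 in D, every vertex labeled Merge has outdegree at most 1 in D, and there is no arc (v,u) ∈ A with L(v)=Merge and L(u)=Fork. -/

import Mathlib

variable {V : Type*} [Fintype V] [DecidableEq V]

/-- Arc adjacency of a digraph given by its finite arc set. -/
def ArcAdj (A : Finset (V × V)) : V → V → Prop := fun u v => (u, v) ∈ A

/-- A digraph is a DAG if it contains no directed cycle. -/
def IsDAG (A : Finset (V × V)) : Prop := ∀ v : V, ¬ Relation.TransGen (ArcAdj A) v v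

/-- Indegree of a vertex. -/
def inDeg (A : Finset (V × V)) (v : V) : ℕ := (A.filter fun e => e.2 = v).card

/-- Outdegree of a vertex. -/
def outDeg (A : Finset (V × V)) (v : V) : ℕ := (A.filter fun e => e.1 = v).card

/-- A source is a vertex of indegree 0. -/
def IsSource (A : Finset (V × V)) (v : V) : Prop := inDeg A v = 0

/-- A sink is a vertex of outdegree 0. -/
def IsSink (A : Finset (V × V)) (v : V) : Prop := outDeg A v = 0

/-- The arcs (consecutive pairs of vertices) of a path given as a list of vertices. -/
def arcsOf (p : List V) : List (V × V) := p.zip p.tail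

/-- A source-sink path: a directed path (with at least one arc) starting at a
source and ending at a sink. -/
def IsSourceSinkPath (A : Finset (V × V)) (p : List V) : Prop :=
  2 ≤ p.length ∧ List.Chain' (ArcAdj A) p ∧ p.Nodup ∧
  (∃ s, p.head? = some s ∧ IsSource A s) ∧
  (∃ t, p.getLast? = some t ∧ IsSink A t)

/-- An arc is private if exactly one source-sink path contains it. -/
def IsPrivate (A : Finset (V × V)) (e : V × V) : Prop :=
  ∃! p : List V, IsSourceSinkPath A p ∧ e ∈ arcsOf p

/-- A funnel: every source-sink path contains at least one private arc. -/
def IsFunnel (A : Finset (V × V)) : Prop :=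
  ∀ p : List V, IsSourceSinkPath A p → ∃ e ∈ arcsOf p, IsPrivate A e

/-- The arc-deletion distance to a funnel: the minimum number of arcs whose
deletion turns the digraph into a funnel. -/
noncomputable def funnelDist (A : Finset (V × V)) : ℕ :=
  sInf {k | ∃ B ⊆ A, B.card = k ∧ IsFunnel (A \ B)}

/-- Vertex labels for funnel labelings. -/
inductive Label : Type where
  | fork
  | merge
deriving DecidableEq

/-- A funnel labeling: Fork vertices have indegree at most 1, Merge vertices have
outdegree at most 1, and no arc goes from a Merge vertex to a Fork vertex. -/
def FunnelLabeling (A : Finset (V × V)) (L : V → Label) : Prop :=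
  (∀ v, L v = Label.fork → inDeg A v ≤ 1) ∧
  (∀ v, L v = Label.merge → outDeg A v ≤ 1) ∧
  ∀ v u, (v, u) ∈ A → ¬(L v = Label.merge ∧ L u = Label.fork)

set_option linter.unusedSectionVars false
set_option linter.unusedVariables false

section Helpers
variable {A : Finset (V × V)}

lemma one_le_outDeg {v c : V} (h : (v, c) ∈ A) : 1 ≤ outDeg A v :=
  Finset.card_pos.mpr ⟨(v, c), Finset.mem_filter.mpr ⟨h, rfl⟩⟩

lemma one_le_inDeg {u v : V} (h : (u, v) ∈ A) : 1 ≤ inDeg A v :=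
  Finset.card_pos.mpr ⟨(u, v), Finset.mem_filter.mpr ⟨h, rfl⟩⟩

lemma IsSink.no_out {v c : V} (hv : IsSink A v) (h : (v, c) ∈ A) : False := by
  have := one_le_outDeg h
  unfold IsSink at hv; omega

lemma IsSource.no_in {u v : V} (hv : IsSource A v) (h : (u, v) ∈ A) : False := by
  have := one_le_inDeg h
  unfold IsSource at hv; omega

lemma out_unique {v c₁ c₂ : V} (h : outDeg A v ≤ 1) (h1 : (v, c₁) ∈ A) (h2 : (v, c₂) ∈ A) :
    c₁ = c₂ := by
  have := Finset.card_le_one.mp h (v, c₁) (Finset.mem_filter.mpr ⟨h1, rfl⟩)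
    (v, c₂) (Finset.mem_filter.mpr ⟨h2, rfl⟩)
  exact congrArg Prod.snd this

lemma in_unique {u₁ u₂ v : V} (h : inDeg A v ≤ 1) (h1 : (u₁, v) ∈ A) (h2 : (u₂, v) ∈ A) :
    u₁ = u₂ := by
  have := Finset.card_le_one.mp h (u₁, v) (Finset.mem_filter.mpr ⟨h1, rfl⟩)
    (u₂, v) (Finset.mem_filter.mpr ⟨h2, rfl⟩)
  exact congrArg Prod.fst this

lemma chain_transGen {r : V → V → Prop} :
    ∀ {l : List V} {a b : V}, List.Chain r a l → b ∈ l → Relation.TransGen r a b := by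
  intro l
  induction l with
  | nil => intro a b _ hb; simp at hb
  | cons c l ih =>
    intro a b hc hb
    rcases List.chain_cons.mp hc with ⟨hac, hcl⟩
    rcases List.mem_cons.mp hb with rfl | hb
    · exact Relation.TransGen.single hac
    · exact Relation.TransGen.head hac (ih hcl hb)

lemma chain'_nodup (hdag : IsDAG A) : ∀ {p : List V}, List.Chain' (ArcAdj A) p → p.Nodup := by
  intro p
  induction p with
  | nil => intro; exact List.nodup_nil
  | cons a l ih =>
    intro hc
    have hch : List.Chain (ArcAdj A) a l := hc
    refine List.nodup_cons.mpr ⟨fun ha => ?_, ih (hc.tail)⟩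
    exact hdag a (chain_transGen hch ha)

lemma arcsOf_nil : arcsOf ([] : List V) = [] := rfl
lemma arcsOf_singleton (a : V) : arcsOf [a] = [] := rfl
lemma arcsOf_cons_cons (a b : V) (l : List V) :
    arcsOf (a :: b :: l) = (a, b) :: arcsOf (b :: l) := rfl

lemma mem_arcsOf_cons {e : V × V} {a : V} {l : List V} :
    e ∈ arcsOf (a :: l) ↔ (∃ b, l.head? = some b ∧ e = (a, b)) ∨ e ∈ arcsOf l := by
  cases l with
  | nil => simp [arcsOf]
  | cons b t =>
    simp only [arcsOf_cons_cons, List.mem_cons, List.head?_cons, Option.some.injEq]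
    constructor
    · rintro (rfl | h); exacts [Or.inl ⟨b, rfl, rfl⟩, Or.inr h]
    · rintro (⟨c, rfl, rfl⟩ | h); exacts [Or.inl rfl, Or.inr h]

lemma arcsOf_sub_cons {e : V × V} {a : V} {l : List V} (h : e ∈ arcsOf l) :
    e ∈ arcsOf (a :: l) := mem_arcsOf_cons.mpr (Or.inr h)

lemma arcsOf_append_left {e : V × V} : ∀ {l₁ : List V} (l₂ : List V),
    e ∈ arcsOf l₁ → e ∈ arcsOf (l₁ ++ l₂) := by
  intro l₁
  induction l₁ with
  | nil => intro l₂ h; simp [arcsOf] at h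
  | cons a t ih =>
    intro l₂ h
    rcases mem_arcsOf_cons.mp h with ⟨b, hb, rfl⟩ | h
    · refine mem_arcsOf_cons.mpr (Or.inl ⟨b, ?_, rfl⟩)
      rw [show t.append l₂ = t ++ l₂ from rfl, List.head?_append, hb]; rfl
    · exact arcsOf_sub_cons (ih l₂ h)

lemma arcsOf_append_right {e : V × V} : ∀ (l₁ : List V) {l₂ : List V},
    e ∈ arcsOf l₂ → e ∈ arcsOf (l₁ ++ l₂) := by
  intro l₁
  induction l₁ with
  | nil => intro l₂ h; simpa using h
  | cons a t ih => intro l₂ h; exact arcsOf_sub_cons (ih h)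

lemma arcsOf_append_split {e : V × V} : ∀ (q : List V) {w r : List V}, w ≠ [] →
    e ∈ arcsOf (q ++ (w ++ r)) → e ∈ arcsOf (q ++ w) ∨ e ∈ arcsOf (w ++ r) := by
  intro q
  induction q with
  | nil => intro w r _ h; exact Or.inr (by simpa using h)
  | cons a q' ih =>
    intro w r hw h
    rcases mem_arcsOf_cons.mp h with ⟨b, hb, rfl⟩ | h
    · left
      refine mem_arcsOf_cons.mpr (Or.inl ⟨b, ?_, rfl⟩)
      rw [show (q').append w = q' ++ w from rfl, List.head?_append]
      rw [show (q').append (w ++ r) = (q' ++ w) ++ r by simp, List.head?_append] at hb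
      cases hqw : (q' ++ w).head? with
      | none => exact absurd (List.head?_eq_none_iff.mp hqw) (by simp [hw])
      | some c => rw [← List.head?_append, hqw]; rw [hqw] at hb; exact hb
    · rcases ih hw h with h | h
      · exact Or.inl (arcsOf_sub_cons h)
      · exact Or.inr h

lemma mem_arcsOf_iff {a b : V} {p : List V} :
    (a, b) ∈ arcsOf p ↔ ∃ l₁ l₂, p = l₁ ++ a :: b :: l₂ := by
  constructor
  · induction p with
    | nil => intro h; simp [arcsOf] at h
    | cons x l ih =>
      intro h
      rcases mem_arcsOf_cons.mp h with ⟨c, hc, he⟩ | h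
      · obtain ⟨rfl, rfl⟩ := Prod.mk.inj he
        cases l with
        | nil => simp at hc
        | cons y t =>
          obtain rfl : y = b := by simpa using hc
          exact ⟨[], t, rfl⟩
      · obtain ⟨l₁, l₂, rfl⟩ := ih h
        exact ⟨x :: l₁, l₂, rfl⟩
  · rintro ⟨l₁, l₂, rfl⟩
    exact arcsOf_append_right l₁ (by simp [arcsOf_cons_cons])

end Helpers

section Main
variable {A : Finset (V × V)}

lemma head?_prefix {α : Type*} {l₁ l₂ : List α} {x : α} (h : l₁.head? = some x) :
    (l₁ ++ l₂).head? = some x := by rw [List.head?_append, h]; rfl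

lemma getLast?_suffix {α : Type*} {l₁ l₂ : List α} {x : α} (h : l₂.getLast? = some x) :
    (l₁ ++ l₂).getLast? = some x := by rw [List.getLast?_append, h]; rfl

lemma wf_in (hdag : IsDAG A) : WellFounded (fun u v : V => (u, v) ∈ A) := by
  haveI : IsIrrefl V (Relation.TransGen (ArcAdj A)) := ⟨hdag⟩
  exact Subrelation.wf (r := Relation.TransGen (ArcAdj A))
    (fun h => Relation.TransGen.single h)
    (Finite.wellFounded_of_trans_of_irrefl (Relation.TransGen (ArcAdj A)))

lemma wf_out (hdag : IsDAG A) : WellFounded (fun u v : V => (v, u) ∈ A) := by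
  haveI : IsIrrefl V (Relation.TransGen (Function.swap (ArcAdj A))) :=
    ⟨fun v h => hdag v (Relation.transGen_swap.mp h)⟩
  exact Subrelation.wf (r := Relation.TransGen (Function.swap (ArcAdj A)))
    (fun h => Relation.TransGen.single h)
    (Finite.wellFounded_of_trans_of_irrefl (Relation.TransGen (Function.swap (ArcAdj A))))

lemma exists_source_chain (hdag : IsDAG A) (v : V) :
    ∃ q : List V, List.Chain' (ArcAdj A) (q ++ [v]) ∧
      ∃ s, (q ++ [v]).head? = some s ∧ IsSource A s := by
  induction v using (wf_in hdag).induction with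
  | _ v IH =>
  by_cases h : inDeg A v = 0
  · exact ⟨[], List.isChain_singleton v, v, rfl, h⟩
  · have hpos : 0 < (A.filter fun e => e.2 = v).card := by
      have h2 : inDeg A v ≠ 0 := h
      unfold inDeg at h2; omega
    obtain ⟨e, he⟩ := Finset.card_pos.mp hpos
    obtain ⟨heA, he2⟩ := Finset.mem_filter.mp he
    have harc : (e.1, v) ∈ A := by rw [← he2]; exact heA
    obtain ⟨q', hq', s, hs, hsrc⟩ := IH e.1 harc
    refine ⟨q' ++ [e.1], ?_, s, head?_prefix hs, hsrc⟩
    refine List.isChain_append.mpr ⟨hq', List.isChain_singleton v, ?_⟩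
    intro x hx y hy
    rw [List.getLast?_concat] at hx
    obtain rfl : e.1 = x := by simpa using hx
    obtain rfl : v = y := by simpa using hy
    exact harc

lemma exists_sink_chain (hdag : IsDAG A) (v : V) :
    ∃ r : List V, List.Chain' (ArcAdj A) (v :: r) ∧
      ∃ t, (v :: r).getLast? = some t ∧ IsSink A t := by
  induction v using (wf_out hdag).induction with
  | _ v IH =>
  by_cases h : outDeg A v = 0
  · exact ⟨[], List.isChain_singleton v, v, rfl, h⟩
  · have hpos : 0 < (A.filter fun e => e.1 = v).card := by
      have h2 : outDeg A v ≠ 0 := h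
      unfold outDeg at h2; omega
    obtain ⟨e, he⟩ := Finset.card_pos.mp hpos
    obtain ⟨heA, he1⟩ := Finset.mem_filter.mp he
    have harc : (v, e.2) ∈ A := by rw [← he1]; exact heA
    obtain ⟨r', hr', t, ht, hsink⟩ := IH e.2 harc
    exact ⟨e.2 :: r', List.isChain_cons_cons.mpr ⟨harc, hr'⟩, t,
      by rw [List.getLast?_cons_cons]; exact ht, hsink⟩

lemma chain_unique {α : Type*} {r : α → α → Prop} {M T : α → Prop}
    (huniq : ∀ b c₁ c₂, M b → r b c₁ → r b c₂ → c₁ = c₂)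
    (hprop : ∀ b c, M b → r b c → M c)
    (hT : ∀ b c, T b → r b c → False) :
    ∀ (p₁ p₂ : List α) (b : α), List.Chain' r p₁ → List.Chain' r p₂ →
      p₁.head? = some b → p₂.head? = some b → M b →
      (∀ x, p₁.getLast? = some x → T x) → (∀ x, p₂.getLast? = some x → T x) →
      p₁ = p₂ := by
  intro p₁
  induction p₁ with
  | nil => intro p₂ b _ _ h; simp at h
  | cons a t₁ ih =>
    intro p₂ b hc₁ hc₂ hh₁ hh₂ hM hT₁ hT₂
    have hab : a = b := by simpa using hh₁
    subst hab
    cases p₂ with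
    | nil => simp at hh₂
    | cons a₂ t₂ =>
      have ha₂ : a₂ = a := by simpa using hh₂
      subst ha₂
      cases t₁ with
      | nil =>
        cases t₂ with
        | nil => rfl
        | cons c₂ t₂' => exact (hT a₂ c₂ (hT₁ a₂ rfl) (List.isChain_cons_cons.mp hc₂).1).elim
      | cons c₁ t₁' =>
        cases t₂ with
        | nil => exact (hT a₂ c₁ (hT₂ a₂ rfl) (List.isChain_cons_cons.mp hc₁).1).elim
        | cons c₂ t₂' =>
          obtain ⟨hbc₁, hc₁'⟩ := List.isChain_cons_cons.mp hc₁
          obtain ⟨hbc₂, hc₂'⟩ := List.isChain_cons_cons.mp hc₂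
          have hcc : c₁ = c₂ := huniq a₂ c₁ c₂ hM hbc₁ hbc₂
          subst hcc
          have := ih (c₁ :: t₂') c₁ hc₁' hc₂' rfl rfl (hprop a₂ c₁ hM hbc₁)
            (fun x hx => hT₁ x (by rw [List.getLast?_cons_cons]; exact hx))
            (fun x hx => hT₂ x (by rw [List.getLast?_cons_cons]; exact hx))
          rw [this]

lemma suffix_unique {L : V → Label} (hL : FunnelLabeling A L) :
    ∀ (p₁ p₂ : List V) (b : V), List.Chain' (ArcAdj A) p₁ → List.Chain' (ArcAdj A) p₂ →
      p₁.head? = some b → p₂.head? = some b → (L b = Label.merge ∨ IsSink A b) →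
      (∀ x, p₁.getLast? = some x → IsSink A x) → (∀ x, p₂.getLast? = some x → IsSink A x) →
      p₁ = p₂ :=
  chain_unique
    (fun b c₁ c₂ hM h1 h2 => by
      rcases hM with hm | hs
      · exact out_unique (hL.2.1 b hm) h1 h2
      · exact (hs.no_out h1).elim)
    (fun b c hM hbc => by
      rcases hM with hm | hs
      · left
        cases hc : L c with
        | merge => rfl
        | fork => exact absurd ⟨hm, hc⟩ (hL.2.2 b c hbc)
      · exact (hs.no_out hbc).elim)
    (fun b c hb hbc => hb.no_out hbc)

lemma prefix_unique {L : V → Label} (hL : FunnelLabeling A L) :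
    ∀ (p₁ p₂ : List V) (a : V), List.Chain' (ArcAdj A) p₁ → List.Chain' (ArcAdj A) p₂ →
      p₁.getLast? = some a → p₂.getLast? = some a → (L a = Label.fork ∨ IsSource A a) →
      (∀ x, p₁.head? = some x → IsSource A x) → (∀ x, p₂.head? = some x → IsSource A x) →
      p₁ = p₂ := by
  intro p₁ p₂ a hc₁ hc₂ hl₁ hl₂ hM hs₁ hs₂
  refine List.reverse_injective
    (chain_unique (r := flip (ArcAdj A)) (M := fun v => L v = Label.fork ∨ IsSource A v)
      (T := IsSource A)
      (fun b c₁ c₂ hMb h1 h2 => by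
        rcases hMb with hf | hs
        · exact in_unique (hL.1 b hf) h1 h2
        · exact (hs.no_in h1).elim)
      (fun b c hMb hbc => by
        rcases hMb with hf | hs
        · left
          cases hc : L c with
          | fork => rfl
          | merge => exact absurd ⟨hc, hf⟩ (hL.2.2 c b hbc)
        · exact (hs.no_in hbc).elim)
      (fun b c hb hbc => hb.no_in hbc)
      p₁.reverse p₂.reverse a (List.isChain_reverse.mpr hc₁) (List.isChain_reverse.mpr hc₂)
      (by rw [List.head?_reverse]; exact hl₁) (by rw [List.head?_reverse]; exact hl₂) hM
      (fun x hx => hs₁ x (by rw [List.getLast?_reverse] at hx; exact hx))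
      (fun x hx => hs₂ x (by rw [List.getLast?_reverse] at hx; exact hx)))

lemma find_split {L : V → Label} (hL : FunnelLabeling A L) :
    ∀ (rest : List V) (x y : V), List.Chain' (ArcAdj A) (x :: y :: rest) →
      (L x = Label.fork ∨ IsSource A x) →
      (∀ t, (x :: y :: rest).getLast? = some t → IsSink A t) →
      ∃ l₁ a b l₂, x :: y :: rest = l₁ ++ a :: b :: l₂ ∧
        (L a = Label.fork ∨ IsSource A a) ∧ (L b = Label.merge ∨ IsSink A b) := by
  intro rest
  induction rest with
  | nil =>
    intro x y _ hx hlast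
    exact ⟨[], x, y, [], rfl, hx, Or.inr (hlast y (by simp))⟩
  | cons z rest' ih =>
    intro x y hc hx hlast
    by_cases hy : L y = Label.merge ∨ IsSink A y
    · exact ⟨[], x, y, z :: rest', rfl, hx, hy⟩
    · have hyf : L y = Label.fork := by
        cases h : L y with
        | fork => rfl
        | merge => exact absurd (Or.inl h) hy
      obtain ⟨l₁, a, b, l₂, heq, ha, hb⟩ := ih y z hc.tail (Or.inl hyf)
        (fun t ht => hlast t (by rw [List.getLast?_cons_cons]; exact ht))
      exact ⟨x :: l₁, a, b, l₂, by rw [List.cons_append, ← heq], ha, hb⟩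

end Main

section Main2
variable {A : Finset (V × V)}

lemma two_out {f y₁ : V} (hf : 2 ≤ outDeg A f) (h1 : (f, y₁) ∈ A) :
    ∃ y₂, (f, y₂) ∈ A ∧ y₂ ≠ y₁ := by
  have : 1 < (A.filter fun e => e.1 = f).card := hf
  obtain ⟨e₁, he₁, e₂, he₂, hne⟩ := Finset.one_lt_card.mp this
  obtain ⟨he₁A, he₁f⟩ := Finset.mem_filter.mp he₁
  obtain ⟨he₂A, he₂f⟩ := Finset.mem_filter.mp he₂
  by_cases h : e₁.2 = y₁
  · refine ⟨e₂.2, by rw [← he₂f]; exact he₂A, ?_⟩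
    intro hc
    exact hne (Prod.ext (he₁f.trans he₂f.symm) (h.trans hc.symm))
  · exact ⟨e₁.2, by rw [← he₁f]; exact he₁A, h⟩

lemma two_in {m x₁ : V} (hm : 2 ≤ inDeg A m) (h1 : (x₁, m) ∈ A) :
    ∃ x₂, (x₂, m) ∈ A ∧ x₂ ≠ x₁ := by
  have : 1 < (A.filter fun e => e.2 = m).card := hm
  obtain ⟨e₁, he₁, e₂, he₂, hne⟩ := Finset.one_lt_card.mp this
  obtain ⟨he₁A, he₁f⟩ := Finset.mem_filter.mp he₁
  obtain ⟨he₂A, he₂f⟩ := Finset.mem_filter.mp he₂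
  by_cases h : e₁.1 = x₁
  · refine ⟨e₂.1, by rw [← he₂f]; exact he₂A, ?_⟩
    intro hc
    exact hne (Prod.ext (h.trans hc.symm) (he₁f.trans he₂f.symm))
  · exact ⟨e₁.1, by rw [← he₁f]; exact he₁A, h⟩

lemma no_bad (hdag : IsDAG A) (hfun : IsFunnel A) {m f : V}
    (hm : 2 ≤ inDeg A m) (hf : 2 ≤ outDeg A f)
    (hreach : Relation.ReflTransGen (ArcAdj A) m f) : False := by
  obtain ⟨l, hchain, hlast⟩ := List.exists_isChain_cons_of_relationReflTransGen hreach
  set w : List V := m :: l with hw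
  have hcw : List.Chain' (ArcAdj A) w := hchain
  have hwne : w ≠ [] := by simp [hw]
  have hwh : w.head? = some m := rfl
  have hwl : w.getLast? = some f := by
    rw [List.getLast?_eq_getLast hwne]; exact congrArg some hlast
  -- backward extension from m
  obtain ⟨qm, hqm, s, hqs, hsrc⟩ := exists_source_chain hdag m
  have hqmne : qm ≠ [] := by
    rintro rfl
    obtain rfl : m = s := by simpa using hqs
    have : inDeg A m = 0 := hsrc
    omega
  obtain ⟨hcqm, _, hglue1⟩ := List.isChain_append.mp hqm
  have hqh : qm.head? = some s := by
    rw [List.head?_append] at hqs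
    cases hq : qm.head? with
    | none => exact absurd (List.head?_eq_none_iff.mp hq) hqmne
    | some u => rw [hq] at hqs; exact hqs
  obtain ⟨x₁, hx₁⟩ : ∃ x₁, qm.getLast? = some x₁ :=
    ⟨qm.getLast hqmne, List.getLast?_eq_getLast hqmne⟩
  have harcx₁ : (x₁, m) ∈ A := hglue1 x₁ hx₁ m rfl
  -- forward extension from f
  obtain ⟨rf, hrf, t, hrt, hsink⟩ := exists_sink_chain hdag f
  have hrfne : rf ≠ [] := by
    rintro rfl
    obtain rfl : f = t := by simpa using hrt
    have : outDeg A f = 0 := hsink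
    omega
  obtain ⟨y₁, rf', rfl⟩ : ∃ y₁ rf', rf = y₁ :: rf' := by
    cases rf with
    | nil => exact absurd rfl hrfne
    | cons y₁ rf' => exact ⟨y₁, rf', rfl⟩
  have harcy₁ : (f, y₁) ∈ A := (List.isChain_cons_cons.mp hrf).1
  have hcrf : List.Chain' (ArcAdj A) (y₁ :: rf') := (List.isChain_cons_cons.mp hrf).2
  have hrt' : (y₁ :: rf').getLast? = some t := by
    rw [← List.getLast?_cons_cons (a := f)]; exact hrt
  -- the chain w ++ rf
  have hcwr : List.Chain' (ArcAdj A) (w ++ y₁ :: rf') := by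
    refine List.isChain_append.mpr ⟨hcw, hcrf, ?_⟩
    intro x hx y hy
    rw [hwl] at hx
    obtain rfl : f = x := by simpa using hx
    obtain rfl : y₁ = y := by simpa using hy
    exact harcy₁
  have hcqw : List.Chain' (ArcAdj A) (qm ++ w) := by
    refine List.isChain_append.mpr ⟨hcqm, hcw, ?_⟩
    intro x hx y hy
    rw [hx₁] at hx
    rw [hwh] at hy
    obtain rfl : x₁ = x := by simpa using hx
    obtain rfl : m = y := by simpa using hy
    exact harcx₁
  -- the main path P
  set P : List V := qm ++ (w ++ y₁ :: rf') with hP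
  have hcP : List.Chain' (ArcAdj A) P := by
    refine List.isChain_append.mpr ⟨hcqm, hcwr, ?_⟩
    intro x hx y hy
    rw [hx₁] at hx
    obtain rfl : x₁ = x := by simpa using hx
    have : y = m := by
      rw [List.head?_append, hwh] at hy
      simpa using hy.symm
    subst this
    exact harcx₁
  have hPh : P.head? = some s := head?_prefix hqh
  have hPl : P.getLast? = some t := getLast?_suffix (getLast?_suffix hrt')
  have hssP : IsSourceSinkPath A P := by
    refine ⟨?_, hcP, chain'_nodup hdag hcP, ⟨s, hPh, hsrc⟩, ⟨t, hPl, hsink⟩⟩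
    have h1 : 1 ≤ qm.length := List.length_pos_iff.mpr hqmne
    simp only [hP, List.length_append]
    simp [hw]; omega
  obtain ⟨e, heP, hpriv⟩ := hfun P hssP
  obtain ⟨p₀, _, hup⟩ := hpriv
  rcases arcsOf_append_split qm hwne heP with hIn | hIn
  · -- e lies in qm ++ w : build an alternative suffix through another out-arc of f
    obtain ⟨y₂, harcy₂, hy₂⟩ := two_out hf harcy₁
    obtain ⟨r₂, hr₂, t₂, hrt₂, hsink₂⟩ := exists_sink_chain hdag y₂
    set P₂ : List V := (qm ++ w) ++ (y₂ :: r₂) with hP₂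
    have hcP₂ : List.Chain' (ArcAdj A) P₂ := by
      refine List.isChain_append.mpr ⟨hcqw, hr₂, ?_⟩
      intro x hx y hy
      have hxf : (qm ++ w).getLast? = some f := getLast?_suffix hwl
      rw [hxf] at hx
      obtain rfl : f = x := by simpa using hx
      obtain rfl : y₂ = y := by simpa using hy
      exact harcy₂
    have hP₂h : P₂.head? = some s := head?_prefix (head?_prefix hqh)
    have hP₂l : P₂.getLast? = some t₂ := getLast?_suffix hrt₂
    have hssP₂ : IsSourceSinkPath A P₂ := by
      refine ⟨?_, hcP₂, chain'_nodup hdag hcP₂, ⟨s, hP₂h, hsrc⟩, ⟨t₂, hP₂l, hsink₂⟩⟩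
      have h1 : 1 ≤ qm.length := List.length_pos_iff.mpr hqmne
      simp only [hP₂, List.length_append]
      simp [hw]; omega
    have heP₂ : e ∈ arcsOf P₂ := arcsOf_append_left _ hIn
    have h1 := hup P ⟨hssP, heP⟩
    have h2 := hup P₂ ⟨hssP₂, heP₂⟩
    have : P = P₂ := h1.trans h2.symm
    rw [hP, hP₂, ← List.append_assoc] at this
    have := List.append_cancel_left this
    exact hy₂ (by simpa using (congrArg List.head? this).symm)
  · -- e lies in w ++ rf : build an alternative prefix through another in-arc of m
    obtain ⟨x₂, harcx₂, hx₂⟩ := two_in hm harcx₁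
    obtain ⟨q₂, hq₂, s₂, hq₂h, hsrc₂⟩ := exists_source_chain hdag x₂
    set P₂ : List V := (q₂ ++ [x₂]) ++ (w ++ y₁ :: rf') with hP₂
    have hq₂h' : (q₂ ++ [x₂]).head? = some s₂ := hq₂h
    have hcP₂ : List.Chain' (ArcAdj A) P₂ := by
      refine List.isChain_append.mpr ⟨hq₂, hcwr, ?_⟩
      intro x hx y hy
      rw [List.getLast?_concat] at hx
      obtain rfl : x₂ = x := by simpa using hx
      have hwrh : (w ++ y₁ :: rf').head? = some m := head?_prefix hwh
      rw [hwrh] at hy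
      obtain rfl : m = y := by simpa using hy
      exact harcx₂
    have hP₂h : P₂.head? = some s₂ := head?_prefix hq₂h'
    have hP₂l : P₂.getLast? = some t := getLast?_suffix (getLast?_suffix hrt')
    have hssP₂ : IsSourceSinkPath A P₂ := by
      refine ⟨?_, hcP₂, chain'_nodup hdag hcP₂, ⟨s₂, hP₂h, hsrc₂⟩, ⟨t, hP₂l, hsink⟩⟩
      simp only [hP₂, List.length_append]
      simp [hw]; omega
    have heP₂ : e ∈ arcsOf P₂ := arcsOf_append_right _ hIn
    have h1 := hup P ⟨hssP, heP⟩
    have h2 := hup P₂ ⟨hssP₂, heP₂⟩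
    have : P = P₂ := h1.trans h2.symm
    rw [hP, hP₂] at this
    have hqeq : qm = q₂ ++ [x₂] := List.append_cancel_right this
    rw [hqeq, List.getLast?_concat] at hx₁
    exact hx₂ (by simpa using hx₁)

end Main2

/-- A DAG is a funnel iff it admits a funnel labeling. -/
theorem funnel_iff_exists_funnelLabeling (A : Finset (V × V)) (hdag : IsDAG A) :
    IsFunnel A ↔ ∃ L : V → Label, FunnelLabeling A L := by
  classical
  constructor
  · intro hfun
    refine ⟨fun v => if ∃ m, 2 ≤ inDeg A m ∧ Relation.ReflTransGen (ArcAdj A) m v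
        then Label.merge else Label.fork, ?_, ?_, ?_⟩
    · intro v hv
      have hv' : (if ∃ m, 2 ≤ inDeg A m ∧ Relation.ReflTransGen (ArcAdj A) m v
          then Label.merge else Label.fork) = Label.fork := hv
      by_contra hcon
      have h2 : 2 ≤ inDeg A v := by omega
      rw [if_pos ⟨v, h2, Relation.ReflTransGen.refl⟩] at hv'
      cases hv'
    · intro v hv
      have hv' : (if ∃ m, 2 ≤ inDeg A m ∧ Relation.ReflTransGen (ArcAdj A) m v
          then Label.merge else Label.fork) = Label.merge := hv
      by_cases hB : ∃ m, 2 ≤ inDeg A m ∧ Relation.ReflTransGen (ArcAdj A) m v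
      · obtain ⟨m, hm, hr⟩ := hB
        by_contra hcon
        exact no_bad hdag hfun hm (by omega) hr
      · rw [if_neg hB] at hv'
        cases hv'
    · rintro v u harc ⟨hv, hu⟩
      have hv' : (if ∃ m, 2 ≤ inDeg A m ∧ Relation.ReflTransGen (ArcAdj A) m v
          then Label.merge else Label.fork) = Label.merge := hv
      have hu' : (if ∃ m, 2 ≤ inDeg A m ∧ Relation.ReflTransGen (ArcAdj A) m u
          then Label.merge else Label.fork) = Label.fork := hu
      by_cases hB : ∃ m, 2 ≤ inDeg A m ∧ Relation.ReflTransGen (ArcAdj A) m v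
      · obtain ⟨m, hm, hr⟩ := hB
        rw [if_pos ⟨m, hm, hr.tail harc⟩] at hu'
        cases hu'
      · rw [if_neg hB] at hv'
        cases hv'
  · rintro ⟨L, hL⟩ p hp
    obtain ⟨hlen, hchain, hnd, ⟨s, hs, hsrc⟩, ⟨t, ht, hsink⟩⟩ := hp
    obtain ⟨x, y, rest, rfl⟩ : ∃ x y rest, p = x :: y :: rest := by
      cases p with
      | nil => simp at hlen
      | cons x p' =>
        cases p' with
        | nil => simp at hlen
        | cons y rest => exact ⟨x, y, rest, rfl⟩
    have hsx : s = x := by simpa using hs.symm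
    subst hsx
    obtain ⟨l₁, a, b, l₂, heq, ha, hb⟩ := find_split hL rest s y hchain (Or.inr hsrc)
      (fun t' ht' => by
        rw [ht] at ht'
        exact (Option.some.inj ht') ▸ hsink)
    have hmem : (a, b) ∈ arcsOf (s :: y :: rest) := mem_arcsOf_iff.mpr ⟨l₁, l₂, heq⟩
    refine ⟨(a, b), hmem, (s :: y :: rest),
      ⟨⟨hlen, hchain, hnd, ⟨s, hs, hsrc⟩, ⟨t, ht, hsink⟩⟩, hmem⟩, ?_⟩
    rintro q ⟨⟨hqlen, hqchain, hqnd, ⟨s', hs', hsrc'⟩, ⟨t', ht', hsink'⟩⟩, heq'⟩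
    obtain ⟨l₁', l₂', hq⟩ := mem_arcsOf_iff.mp heq'
    -- rewrite both as (prefix ++ [a]) ++ (b :: suffix)
    have hp2 : s :: y :: rest = (l₁ ++ [a]) ++ (b :: l₂) := by rw [heq]; simp
    have hq2 : q = (l₁' ++ [a]) ++ (b :: l₂') := by rw [hq]; simp
    -- chains
    have hcp := hp2 ▸ hchain
    have hcq := hq2 ▸ hqchain
    obtain ⟨hcp1, hcp2, -⟩ := List.isChain_append.mp hcp
    obtain ⟨hcq1, hcq2, -⟩ := List.isChain_append.mp hcq
    -- prefix equality
    have hpre : l₁' ++ [a] = l₁ ++ [a] := by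
      refine prefix_unique hL (l₁' ++ [a]) (l₁ ++ [a]) a hcq1 hcp1
        List.getLast?_concat List.getLast?_concat ha ?_ ?_
      · intro x hx
        have : q.head? = some x := by rw [hq2]; exact head?_prefix hx
        rw [hs'] at this
        obtain rfl : s' = x := by simpa using this
        exact hsrc'
      · intro x hx
        have : (s :: y :: rest).head? = some x := by rw [hp2]; exact head?_prefix hx
        rw [hs] at this
        obtain rfl : s = x := by simpa using this
        exact hsrc
    -- suffix equality
    have hsuf : (b :: l₂') = (b :: l₂) := by
      refine suffix_unique hL (b :: l₂') (b :: l₂) b hcq2 hcp2 rfl rfl hb ?_ ?_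
      · intro x hx
        have : q.getLast? = some x := by rw [hq2]; exact getLast?_suffix hx
        rw [ht'] at this
        obtain rfl : t' = x := by simpa using this
        exact hsink'
      · intro x hx
        have : (s :: y :: rest).getLast? = some x := by rw [hp2]; exact getLast?_suffix hx
        rw [ht] at this
        obtain rfl : t = x := by simpa using this
        exact hsink
    rw [hq2, hpre, hsuf, ← hp2]
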